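/- arXiv:1708.01426 — 3 statements merged into one kernel-verified Lean document; each statement's English description precedes it below -/
import Mathlib

section
/- Algebraic independence of the quadratic invariants (Theorem 3.1(i), second part). Assume m ≥ 2k. The k(k+1)/2 polynomials r²_ij, 1 ≤ i ≤ j ≤ k, are algebraically independent over ℂ; in particular, the unital subalgebra of P they generate is a polynomial algebra in k(k+1)/2 generators (isomorphic to the symmetric algebra on the span of the r²_ij). -/
open scoped TensorProduct

noncomputable section

/-- Scalar polynomials in the m·k variables x_{li}. -/
abbrev Pscal (m k : ℕ) := MvPolynomial (Fin m × Fin k) ℂ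

/-- The quadratic form Q(z) = -(z₁² + ⋯ + z_m²) on ℂ^m. -/
def Qf (m : ℕ) : QuadraticForm ℂ (Fin m → ℂ) :=
  QuadraticMap.weightedSumSquares ℂ (fun _ : Fin m => (-1 : ℂ))

/-- The complex Clifford algebra C_m. -/
abbrev Cl (m : ℕ) := CliffordAlgebra (Qf m)

/-- The generator e_l of the Clifford algebra. -/
def e (m : ℕ) (l : Fin m) : Cl m := CliffordAlgebra.ι (Qf m) (Pi.single l 1)

/-- C_m-valued polynomials. -/
abbrev PC (m k : ℕ) := Pscal m k ⊗[ℂ] Cl m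

/-- Partial derivative ∂_{x_{li}} acting on C_m-valued polynomials. -/
def pd (m k : ℕ) (l : Fin m) (i : Fin k) : PC m k →ₗ[ℂ] PC m k :=
  LinearMap.rTensor (Cl m) (MvPolynomial.pderiv (l, i)).toLinearMap

/-- The j-th Dirac operator ∂_{x_j} = Σ_l e_l ∂_{x_{lj}}. -/
def dirac (m k : ℕ) (j : Fin k) : PC m k →ₗ[ℂ] PC m k :=
  ∑ l : Fin m,
    (LinearMap.mulLeft ℂ ((1 : Pscal m k) ⊗ₜ[ℂ] e m l)) ∘ₗ pd m k l j

/-- The space M of monogenic polynomials. -/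
def Mono (m k : ℕ) : Submodule ℂ (PC m k) :=
  ⨅ j : Fin k, LinearMap.ker (dirac m k j)

/-- The j-th vector variable x_j = Σ_l e_l x_{lj}. -/
def xv (m k : ℕ) (j : Fin k) : PC m k :=
  ∑ l : Fin m, (MvPolynomial.X (l, j) : Pscal m k) ⊗ₜ[ℂ] e m l

/-- For J = {j₁ < ⋯ < j_r} ⊆ {1,…,k}, the product x_J = x_{j₁} ⋯ x_{j_r}. -/
def xJ (m k : ℕ) (J : Finset (Fin k)) : PC m k :=
  ((J.sort (· ≤ ·)).map (xv m k)).prod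

/-- The invariant r²_ij = Σ_l x_{li} x_{lj}. -/
def rP (m k : ℕ) (i j : Fin k) : Pscal m k :=
  ∑ l : Fin m, MvPolynomial.X (l, i) * MvPolynomial.X (l, j)

/-- Products ∏_{1≤i≤j≤k} r_ij^{2 n_ij} indexed by finitely supported families. -/
def rprod (m k : ℕ) (n : {p : Fin k × Fin k // p.1 ≤ p.2} →₀ ℕ) : Pscal m k :=
  n.prod fun p e => rP m k p.1.1 p.1.2 ^ (2 * e)

/-- The element (∏ r_ij^{2n_ij}) · x_J of P⊗C_m. -/
def basisElem (m k : ℕ) (J : Finset (Fin k))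
    (n : {p : Fin k × Fin k // p.1 ≤ p.2} →₀ ℕ) : PC m k :=
  (rprod m k n ⊗ₜ[ℂ] (1 : Cl m)) * xJ m k J

/-- The operator Δ_ij = Σ_l ∂_{x_{li}} ∂_{x_{lj}} on scalar polynomials. -/
def lap (m k : ℕ) (i j : Fin k) : Pscal m k →ₗ[ℂ] Pscal m k :=
  ∑ l : Fin m,
    (MvPolynomial.pderiv (l, i)).toLinearMap ∘ₗ (MvPolynomial.pderiv (l, j)).toLinearMap

/-- The space H of harmonic scalar polynomials. -/
def Harm (m k : ℕ) : Submodule ℂ (Pscal m k) :=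
  ⨅ p : {p : Fin k × Fin k // p.1 ≤ p.2}, LinearMap.ker (lap m k p.1.1 p.1.2)

/-- The operator Δ_ij acting on C_m-valued polynomials. -/
def lapC (m k : ℕ) (i j : Fin k) : PC m k →ₗ[ℂ] PC m k :=
  ∑ l : Fin m, pd m k l i ∘ₗ pd m k l j

/-- The space of C_m-valued harmonic polynomials. -/
def HarmC (m k : ℕ) : Submodule ℂ (PC m k) :=
  ⨅ p : {p : Fin k × Fin k // p.1 ≤ p.2}, LinearMap.ker (lapC m k p.1.1 p.1.2)

/-- The operator E_ij = Σ_l x_{li} ∂_{x_{lj}} acting on C_m-valued polynomials. -/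
def Eop (m k : ℕ) (i j : Fin k) : PC m k →ₗ[ℂ] PC m k :=
  ∑ l : Fin m,
    (LinearMap.mulLeft ℂ ((MvPolynomial.X (l, i) : Pscal m k) ⊗ₜ[ℂ] (1 : Cl m))) ∘ₗ pd m k l j

/-- The space M^S of simplicial monogenic polynomials. -/
def SimpMono (m k : ℕ) : Submodule ℂ (PC m k) :=
  Mono m k ⊓ ⨅ p : {p : Fin k × Fin k // p.1 < p.2}, LinearMap.ker (Eop m k p.1.1 p.1.2)

/-- Scalar polynomials homogeneous of total degree ℓ. -/
abbrev Pdeg (m k : ℕ) (ℓ : ℕ) : Submodule ℂ (Pscal m k) :=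
  MvPolynomial.homogeneousSubmodule (Fin m × Fin k) ℂ ℓ

/-- Scalar homogeneous polynomials, zero in negative degrees. -/
def PdegZ (m k : ℕ) (n : ℤ) : Submodule ℂ (Pscal m k) :=
  if 0 ≤ n then Pdeg m k n.toNat else ⊥

/-- C_m-valued polynomials homogeneous of total degree ℓ. -/
def PCdeg (m k : ℕ) (ℓ : ℕ) : Submodule ℂ (PC m k) :=
  LinearMap.range (LinearMap.rTensor (Cl m) (Pdeg m k ℓ).subtype)

/-- C_m-valued homogeneous polynomials, zero in negative degrees. -/
def PCdegZ (m k : ℕ) (n : ℤ) : Submodule ℂ (PC m k) :=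
  if 0 ≤ n then PCdeg m k n.toNat else ⊥

/-- Monogenic polynomials homogeneous of given degree, zero in negative degrees. -/
def MdegZ (m k : ℕ) (n : ℤ) : Submodule ℂ (PC m k) :=
  if 0 ≤ n then Mono m k ⊓ PCdeg m k n.toNat else ⊥

/-- C_m-valued polynomials multihomogeneous of degree a_i in the i-th column x_{1i},…,x_{mi}. -/
def PCmdeg (m k : ℕ) (a : Fin k → ℕ) : Submodule ℂ (PC m k) :=
  LinearMap.range (LinearMap.rTensor (Cl m)
    (MvPolynomial.weightedHomogeneousSubmodule ℂ
      (fun p : Fin m × Fin k => Pi.single p.2 1) a).subtype)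

/-- The action of SO(m) on scalar polynomials by x_{li} ↦ Σ_s g_{sl} x_{si}. -/
def soAct (m k : ℕ) (g : Matrix (Fin m) (Fin m) ℝ) : Pscal m k →ₐ[ℂ] Pscal m k :=
  MvPolynomial.aeval fun p : Fin m × Fin k =>
    ∑ s : Fin m, MvPolynomial.C (g s p.1 : ℂ) * MvPolynomial.X (s, p.2)

/-- The Fischer inner product on scalar polynomials. -/
def fischer (m k : ℕ) (f g : Pscal m k) : ℂ :=
  ∑ α ∈ f.support,
    (α.prod fun _ e => (Nat.factorial e : ℂ)) * (starRingEnd ℂ) (f.coeff α) * g.coeff α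

end

private lemma finSumSplit {M : Type*} [AddCommMonoid M] {m k : ℕ} (h : 2*k ≤ m) (F : Fin m → M)
    (h0 : ∀ l : Fin m, 2*k ≤ (l:ℕ) → F l = 0) :
    ∑ l, F l = ∑ l' : Fin k, (F ⟨l', by omega⟩ + F ⟨k + l', by omega⟩) := by
  classical
  set F' : ℕ → M := fun n => if h : n < m then F ⟨n, h⟩ else 0 with hF'
  have h1 : ∑ l : Fin m, F l = ∑ n ∈ Finset.range m, F' n := by
    rw [← Fin.sum_univ_eq_sum_range]
    exact Finset.sum_congr rfl fun l _ => by simp [hF', l.isLt]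
  have h2 : ∑ n ∈ Finset.range m, F' n = ∑ n ∈ Finset.range (2*k), F' n := by
    refine (Finset.sum_subset (Finset.range_subset_range.2 h) ?_).symm
    intro n hn hn2
    simp only [Finset.mem_range, not_lt] at hn hn2
    simp only [hF', dif_pos hn]
    exact h0 _ hn2
  have h3 : ∑ n ∈ Finset.range (2*k), F' n
      = ∑ n ∈ Finset.range k, F' n + ∑ n ∈ Finset.range k, F' (k + n) := by
    rw [two_mul, Finset.sum_range_add]
  rw [h1, h2, h3, Finset.sum_add_distrib, ← Fin.sum_univ_eq_sum_range, ← Fin.sum_univ_eq_sum_range]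
  refine congrArg₂ (· + ·) (Finset.sum_congr rfl fun l _ => ?_) (Finset.sum_congr rfl fun l _ => ?_) <;>
    exact dif_pos (by omega)

/-- Algebraic independence of the quadratic invariants (Theorem 3.1(i), second part):
in the stable range, the k(k+1)/2 polynomials r²_ij, 1 ≤ i ≤ j ≤ k, are algebraically
independent over ℂ. -/
theorem r_algebraicIndependent (m k : ℕ) (hm : 1 ≤ m) (hk : 1 ≤ k)
    (hrange : 2 * k ≤ m) :
    AlgebraicIndependent ℂ
      (fun p : {p : Fin k × Fin k // p.1 ≤ p.2} => rP m k p.1.1 p.1.2) := by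
  classical
  set R := MvPolynomial {p : Fin k × Fin k // p.1 ≤ p.2} ℂ with hR
  -- auxiliary polynomials
  set q : Fin k → Fin k → R := fun l i =>
    if h : l ≤ i then MvPolynomial.C (if l = i then (1/4 : ℂ) else (1/2 : ℂ)) *
        MvPolynomial.X ⟨(l, i), h⟩ else 0 with hq
  set δ : Fin k → Fin k → R := fun l i => if l = i then 1 else 0 with hδ
  set u : Fin k → Fin k → R := fun l i => δ l i + q l i with hu
  set v : Fin k → Fin k → R := fun l i => MvPolynomial.C Complex.I * (δ l i - q l i) with hv
  set g : Fin m × Fin k → R := fun p =>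
    if h : (p.1 : ℕ) < k then u ⟨p.1, h⟩ p.2
    else if h2 : (p.1 : ℕ) < 2*k then v ⟨(p.1 : ℕ) - k, by omega⟩ p.2
    else 0 with hg
  set ψ : Pscal m k →ₐ[ℂ] R := MvPolynomial.aeval g with hψ
  have hI : (MvPolynomial.C Complex.I : R) * MvPolynomial.C Complex.I = -1 := by
    rw [← map_mul, Complex.I_mul_I, map_neg, map_one]
  have key : ∀ p : {p : Fin k × Fin k // p.1 ≤ p.2},
      ψ (rP m k p.1.1 p.1.2) = MvPolynomial.X p := by
    rintro ⟨⟨i, j⟩, hij⟩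
    have h1 : ψ (rP m k i j) = ∑ l : Fin m, g (l, i) * g (l, j) := by
      simp [rP, hψ, map_sum]
    rw [h1]
    have h2 : ∑ l : Fin m, g (l, i) * g (l, j)
        = ∑ l' : Fin k, (g (⟨l', by omega⟩, i) * g (⟨l', by omega⟩, j)
            + g (⟨k + l', by omega⟩, i) * g (⟨k + l', by omega⟩, j)) := by
      exact finSumSplit hrange (fun l => g (l, i) * g (l, j))
        (fun l hl => by simp only [hg]; rw [dif_neg (by omega), dif_neg (by omega)]; ring)
    rw [h2]
    have h3 : ∀ l' : Fin k,
        g (⟨(l' : ℕ), by omega⟩, i) * g (⟨(l' : ℕ), by omega⟩, j)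
          + g (⟨k + l', by omega⟩, i) * g (⟨k + l', by omega⟩, j)
        = 2 * (δ l' i * q l' j + q l' i * δ l' j) := by
      intro l'
      have e1 : g (⟨(l' : ℕ), by omega⟩, i) = u l' i := by
        simp only [hg]; rw [dif_pos (by omega)]
      have e1' : g (⟨(l' : ℕ), by omega⟩, j) = u l' j := by
        simp only [hg]; rw [dif_pos (by omega)]
      have e2 : g (⟨k + (l' : ℕ), by omega⟩, i) = v l' i := by
        simp only [hg]; rw [dif_neg (by omega), dif_pos (by omega)]
        congr 1; ext; simp
      have e2' : g (⟨k + (l' : ℕ), by omega⟩, j) = v l' j := by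
        simp only [hg]; rw [dif_neg (by omega), dif_pos (by omega)]
        congr 1; ext; simp
      rw [e1, e1', e2, e2', hu, hv]
      linear_combination ((δ l' i - q l' i) * (δ l' j - q l' j)) * hI
    rw [Finset.sum_congr rfl fun l' _ => h3 l']
    have h4 : ∑ l' : Fin k, 2 * (δ l' i * q l' j + q l' i * δ l' j)
        = 2 * q i j + 2 * q j i := by
      have step : ∀ l' : Fin k, 2 * (δ l' i * q l' j + q l' i * δ l' j)
          = (if l' = i then 2 * q l' j else 0) + (if l' = j then 2 * q l' i else 0) := by
        intro l'; simp only [hδ]; split_ifs <;> ring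
      rw [Finset.sum_congr rfl fun l' _ => step l', Finset.sum_add_distrib,
          Finset.sum_ite_eq' Finset.univ i (fun l' => 2 * q l' j),
          Finset.sum_ite_eq' Finset.univ j (fun l' => 2 * q l' i)]
      simp
    rw [h4]
    replace hij : i ≤ j := hij
    have hC2 : (2:R) = MvPolynomial.C (2:ℂ) := by rw [map_ofNat]
    rcases eq_or_lt_of_le hij with heq | hlt
    · subst heq
      simp only [hq, dif_pos (le_refl i), if_pos rfl]
      rw [hC2, ← mul_assoc, ← MvPolynomial.C_mul, ← add_mul, ← MvPolynomial.C_add]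
      norm_num
    · simp only [hq, dif_pos hij, dif_neg (not_le.2 hlt), if_neg (Fin.ne_of_lt hlt)]
      rw [mul_zero, add_zero, hC2, ← mul_assoc, ← MvPolynomial.C_mul]
      norm_num
  refine AlgebraicIndependent.of_comp ψ ?_
  have : (ψ ∘ fun p : {p : Fin k × Fin k // p.1 ≤ p.2} => rP m k p.1.1 p.1.2)
      = fun p => MvPolynomial.X p := funext key
  rw [this]
  exact MvPolynomial.algebraicIndependent_X _ _
end

section
/- Decomposition of monogenics into simplicial monogenics (Lemma 4.2(i)). Assume m ≥ 2k and let ℓ ∈ ℕ. Then M_ℓ = M^S_ℓ ⊕ Σ_{1≤i<j≤k} E_ji(M_ℓ); that is, M^S_ℓ together with the (not necessarily direct) sum of the subspaces E_ji(M_ℓ) over all pairs 1 ≤ i < j ≤ k spans M_ℓ, and M^S_ℓ ∩ (Σ_{1≤i<j≤k} E_ji(M_ℓ)) = {0}. -/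
open scoped TensorProduct

noncomputable section Aux

namespace AuxCl

variable (m : ℕ)

lemma Qf_single (l : Fin m) : Qf m (Pi.single l 1) = -1 := by
  rw [Qf, QuadraticMap.weightedSumSquares_apply]
  rw [Finset.sum_eq_single l]
  · simp
  · intro b _ hb; simp [Pi.single_eq_of_ne hb]
  · simp

lemma e_mul_self (l : Fin m) : e m l * e m l = -1 := by
  rw [e, CliffordAlgebra.ι_sq_scalar, Qf_single, map_neg, map_one]

lemma e_anticomm {l l' : Fin m} (h : l ≠ l') :
    e m l * e m l' = -(e m l' * e m l) := by
  have horth : (Qf m).IsOrtho (Pi.single l 1) (Pi.single l' 1) := by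
    have key : ∀ i : Fin m, (Pi.single l 1 + Pi.single l' 1 : Fin m → ℂ) i * (Pi.single l 1 + Pi.single l' 1 : Fin m → ℂ) i
        = (Pi.single l 1 : Fin m → ℂ) i * (Pi.single l 1 : Fin m → ℂ) i + (Pi.single l' 1 : Fin m → ℂ) i * (Pi.single l' 1 : Fin m → ℂ) i := by
      intro i
      rcases eq_or_ne i l with rfl | h1 <;> rcases eq_or_ne i l' with rfl | h2 <;>
        simp_all [Pi.single_eq_of_ne, Pi.single_eq_same]
    rw [QuadraticMap.isOrtho_def, Qf, QuadraticMap.weightedSumSquares_apply,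
      QuadraticMap.weightedSumSquares_apply, QuadraticMap.weightedSumSquares_apply,
      ← Finset.sum_add_distrib]
    refine Finset.sum_congr rfl fun i _ => ?_
    rw [key i, smul_add]
  have := CliffordAlgebra.ι_mul_ι_add_swap_of_isOrtho horth
  rw [e, e]
  linear_combination (norm := noncomm_ring) this

def PL (L : List (Fin m)) : Cl m := (L.map (e m)).prod

def eprod (s : Finset (Fin m)) : Cl m := PL m (s.sort (· ≤ ·))

def Tspan : Submodule ℂ (Cl m) := Submodule.span ℂ (Set.range (eprod m))

lemma PL_nil : PL m [] = 1 := rfl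

lemma PL_cons (a : Fin m) (L : List (Fin m)) : PL m (a :: L) = e m a * PL m L := by
  simp [PL]

lemma eprod_lt_insert (l : Fin m) (s : Finset (Fin m)) (h : ∀ x ∈ s, l < x) :
    e m l * eprod m s = eprod m (insert l s) := by
  have hl : l ∉ s := fun hmem => lt_irrefl l (h l hmem)
  rw [eprod, eprod, Finset.sort_insert (· ≤ ·) (fun b hb => (h b hb).le) hl, PL_cons]

lemma PL_sorted_eq_eprod : ∀ (L : List (Fin m)), L.Pairwise (· < ·) →
    PL m L = eprod m L.toFinset
  | [], _ => by simp [PL_nil, eprod, Finset.sort_empty, PL]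
  | a :: L, h => by
    have hA := List.pairwise_cons.mp h
    rw [PL_cons, PL_sorted_eq_eprod L hA.2, List.toFinset_cons,
      eprod_lt_insert m a _ (fun x hx => hA.1 x (List.mem_toFinset.mp hx))]

lemma e_mul_PL : ∀ (L : List (Fin m)), L.Pairwise (· < ·) → ∀ l : Fin m,
    ∃ c : ℂ, ∃ t : Finset (Fin m), t ⊆ insert l L.toFinset ∧
      e m l * PL m L = c • eprod m t
  | [], _, l => ⟨1, {l}, by simp, by
      simp [PL_nil, eprod, Finset.sort_singleton, PL]⟩
  | a :: L, h, l => by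
    have hA := List.pairwise_cons.mp h
    rcases lt_trichotomy l a with hla | rfl | hal
    · refine ⟨1, insert l (a :: L).toFinset, subset_rfl, ?_⟩
      rw [one_smul, ← eprod_lt_insert m l _ ?_, PL_sorted_eq_eprod m _ h]
      intro x hx
      rcases List.mem_cons.mp (List.mem_toFinset.mp hx) with rfl | h1
      · exact hla
      · exact hla.trans (hA.1 x h1)
    · refine ⟨-1, L.toFinset, ?_, ?_⟩
      · intro x hx; simp [Finset.mem_insert, List.mem_toFinset.mp hx]
      · rw [PL_cons, ← mul_assoc, e_mul_self, PL_sorted_eq_eprod m L hA.2]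
        simp
    · obtain ⟨c, t, hsub, heq⟩ := e_mul_PL L hA.2 l
      refine ⟨-c, insert a t, ?_, ?_⟩
      · intro x hx
        rcases Finset.mem_insert.mp hx with rfl | h1
        · simp
        · rcases Finset.mem_insert.mp (hsub h1) with rfl | h2
          · exact Finset.mem_insert_self _ _
          · exact Finset.mem_insert_of_mem (by simp [h2])
      · have hat : ∀ x ∈ t, a < x := by
          intro x hx
          rcases Finset.mem_insert.mp (hsub hx) with rfl | h2
          · exact hal
          · exact hA.1 x (List.mem_toFinset.mp h2)
        rw [PL_cons, ← mul_assoc, e_anticomm m (ne_of_gt hal), neg_mul, mul_assoc, heq,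
          mul_smul_comm, eprod_lt_insert m a t hat, neg_smul, ← neg_smul]

lemma e_mul_mem (l : Fin m) {x : Cl m} (hx : x ∈ Tspan m) : e m l * x ∈ Tspan m := by
  induction hx using Submodule.span_induction with
  | mem y hy =>
    obtain ⟨s, rfl⟩ := hy
    obtain ⟨c, t, -, heq⟩ := e_mul_PL m (s.sort (· ≤ ·)) (Finset.sortedLT_sort s).pairwise l
    rw [eprod, heq]
    exact Submodule.smul_mem _ _ (Submodule.subset_span ⟨t, rfl⟩)
  | zero => rw [mul_zero]; exact zero_mem _
  | add y z _ _ hy hz => rw [mul_add]; exact add_mem hy hz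
  | smul c y _ hy => rw [mul_smul_comm]; exact Submodule.smul_mem _ _ hy

lemma PL_mul_mem : ∀ (L : List (Fin m)) {x : Cl m}, x ∈ Tspan m → PL m L * x ∈ Tspan m
  | [], x, hx => by rw [PL_nil, one_mul]; exact hx
  | a :: L, x, hx => by
    rw [PL_cons, mul_assoc]
    exact e_mul_mem m a (PL_mul_mem L hx)

lemma mul_mem_Tspan {x y : Cl m} (hx : x ∈ Tspan m) (hy : y ∈ Tspan m) :
    x * y ∈ Tspan m := by
  induction hx using Submodule.span_induction with
  | mem z hz => obtain ⟨s, rfl⟩ := hz; exact PL_mul_mem m _ hy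
  | zero => rw [zero_mul]; exact zero_mem _
  | add a b _ _ ha hb => rw [add_mul]; exact add_mem ha hb
  | smul c a _ ha => rw [smul_mul_assoc]; exact Submodule.smul_mem _ _ ha

lemma one_mem_Tspan : (1 : Cl m) ∈ Tspan m := by
  have : eprod m ∅ = 1 := by simp [eprod, Finset.sort_empty, PL]
  rw [← this]
  exact Submodule.subset_span ⟨∅, rfl⟩

lemma e_mem_Tspan (l : Fin m) : e m l ∈ Tspan m := by
  have h1 := one_mem_Tspan m
  have := e_mul_mem m l h1
  rwa [mul_one] at this

lemma Tspan_eq_top : Tspan m = ⊤ := by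
  rw [eq_top_iff]
  intro x _
  refine CliffordAlgebra.induction ?_ ?_ ?_ ?_ x
  · intro r
    rw [Algebra.algebraMap_eq_smul_one]
    exact Submodule.smul_mem _ _ (one_mem_Tspan m)
  · intro v
    have hv : v = ∑ l : Fin m, v l • (Pi.single l 1 : Fin m → ℂ) := by
      ext j; simp [Pi.single_apply, Finset.sum_ite_eq', eq_comm]
    rw [hv, map_sum]
    refine sum_mem fun l _ => ?_
    rw [map_smul]
    exact Submodule.smul_mem _ _ (e_mem_Tspan m l)
  · intro a b ha hb; exact mul_mem_Tspan m ha hb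
  · intro a b ha hb; exact add_mem ha hb

instance : Module.Finite ℂ (Cl m) :=
  ⟨by rw [← Tspan_eq_top m]; exact Submodule.fg_span (Set.finite_range _)⟩

end AuxCl



def Esc (m k : ℕ) (i j : Fin k) : Pscal m k →ₗ[ℂ] Pscal m k :=
  ∑ l : Fin m,
    (LinearMap.mulLeft ℂ (MvPolynomial.X (l, i) : Pscal m k)) ∘ₗ
      (MvPolynomial.pderiv (l, j)).toLinearMap

def wC (m k : ℕ) (α : Fin m × Fin k →₀ ℕ) : ℂ := α.prod fun _ e => (Nat.factorial e : ℂ)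

def wR (m k : ℕ) (α : Fin m × Fin k →₀ ℕ) : ℝ := α.prod fun _ e => (Nat.factorial e : ℝ)

namespace AuxF

open MvPolynomial

variable (m k : ℕ)

lemma wC_prod (α : Fin m × Fin k →₀ ℕ) :
    wC m k α = ∏ p ∈ α.support, ((α p).factorial : ℂ) := rfl

lemma wR_prod (α : Fin m × Fin k →₀ ℕ) :
    wR m k α = ∏ p ∈ α.support, ((α p).factorial : ℝ) := rfl

lemma fischer_def (f g : Pscal m k) :
    fischer m k f g = ∑ α ∈ f.support,
      wC m k α * (starRingEnd ℂ) (f.coeff α) * g.coeff α := rfl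

lemma fischer_eq_sum (f g : Pscal m k) {s : Finset (Fin m × Fin k →₀ ℕ)}
    (hs : f.support ⊆ s) :
    fischer m k f g = ∑ α ∈ s, wC m k α * (starRingEnd ℂ) (f.coeff α) * g.coeff α :=
  Finset.sum_subset hs fun α _ hα => by
    simp [notMem_support_iff.mp hα]

lemma fischer_add_left (f g h : Pscal m k) :
    fischer m k (f + g) h = fischer m k f h + fischer m k g h := by
  classical
  rw [fischer_eq_sum m k (f + g) h (s := f.support ∪ g.support) support_add,
    fischer_eq_sum m k f h (s := f.support ∪ g.support) Finset.subset_union_left,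
    fischer_eq_sum m k g h (s := f.support ∪ g.support) Finset.subset_union_right,
    ← Finset.sum_add_distrib]
  refine Finset.sum_congr rfl fun α _ => ?_
  rw [coeff_add, map_add]
  ring

lemma fischer_smul_left (c : ℂ) (f g : Pscal m k) :
    fischer m k (c • f) g = (starRingEnd ℂ) c * fischer m k f g := by
  rw [fischer_eq_sum m k (c • f) g (s := f.support) support_smul, fischer_def, Finset.mul_sum]
  refine Finset.sum_congr rfl fun α _ => ?_
  rw [coeff_smul, smul_eq_mul, map_mul]
  ring

lemma fischer_add_right (f g h : Pscal m k) :
    fischer m k f (g + h) = fischer m k f g + fischer m k f h := by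
  rw [fischer_def, fischer_def, fischer_def, ← Finset.sum_add_distrib]
  refine Finset.sum_congr rfl fun α _ => ?_
  rw [coeff_add]
  ring

lemma fischer_smul_right (c : ℂ) (f g : Pscal m k) :
    fischer m k f (c • g) = c * fischer m k f g := by
  rw [fischer_def, fischer_def, Finset.mul_sum]
  refine Finset.sum_congr rfl fun α _ => ?_
  rw [coeff_smul, smul_eq_mul]
  ring

lemma fischer_zero_right (f : Pscal m k) : fischer m k f 0 = 0 := by
  simp [fischer]

lemma fischer_zero_left (g : Pscal m k) : fischer m k 0 g = 0 := by
  simp [fischer]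

lemma fischer_sum_left {ι : Type*} (s : Finset ι) (F : ι → Pscal m k) (g : Pscal m k) :
    fischer m k (∑ i ∈ s, F i) g = ∑ i ∈ s, fischer m k (F i) g := by
  induction s using Finset.cons_induction with
  | empty => simp [fischer_zero_left]
  | cons a s ha ih => rw [Finset.sum_cons, Finset.sum_cons, fischer_add_left, ih]

lemma fischer_sum_right {ι : Type*} (s : Finset ι) (f : Pscal m k) (G : ι → Pscal m k) :
    fischer m k f (∑ i ∈ s, G i) = ∑ i ∈ s, fischer m k f (G i) := by
  induction s using Finset.cons_induction with
  | empty => simp [fischer_zero_right]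
  | cons a s ha ih => rw [Finset.sum_cons, Finset.sum_cons, fischer_add_right, ih]

lemma conj_wC (α : Fin m × Fin k →₀ ℕ) : (starRingEnd ℂ) (wC m k α) = wC m k α := by
  rw [wC_prod, map_prod]
  exact Finset.prod_congr rfl fun p _ => by rw [map_natCast]

lemma fischer_conj (f g : Pscal m k) :
    (starRingEnd ℂ) (fischer m k f g) = fischer m k g f := by
  classical
  rw [fischer_eq_sum m k f g (s := f.support ∪ g.support) Finset.subset_union_left,
    fischer_eq_sum m k g f (s := f.support ∪ g.support) Finset.subset_union_right,
    map_sum]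
  refine Finset.sum_congr rfl fun α _ => ?_
  rw [map_mul, map_mul, conj_wC, Complex.conj_conj]
  ring

lemma fischer_monomial (α β : Fin m × Fin k →₀ ℕ) (a b : ℂ) :
    fischer m k (monomial α a) (monomial β b) =
      if α = β then wC m k α * (starRingEnd ℂ) a * b else 0 := by
  classical
  rw [fischer_eq_sum m k _ _ (s := {α}) support_monomial_subset, Finset.sum_singleton]
  by_cases h : α = β
  · subst h
    simp [coeff_monomial]
  · simp [coeff_monomial, h, Ne.symm h]

lemma wC_eq (α : Fin m × Fin k →₀ ℕ) : wC m k α = ((wR m k α : ℝ) : ℂ) := by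
  rw [wC_prod, wR_prod, Complex.ofReal_prod]
  exact Finset.prod_congr rfl fun p _ => by push_cast; ring

lemma wR_pos (α : Fin m × Fin k →₀ ℕ) : 0 < wR m k α := wR_prod m k α ▸
  Finset.prod_pos fun p _ => Nat.cast_pos.mpr (Nat.factorial_pos _)

lemma fischer_self_eq (f : Pscal m k) :
    fischer m k f f =
      ((∑ α ∈ f.support, wR m k α * Complex.normSq (f.coeff α) : ℝ) : ℂ) := by
  rw [fischer_def, Complex.ofReal_sum]
  refine Finset.sum_congr rfl fun α _ => ?_
  rw [Complex.ofReal_mul, ← wC_eq, mul_assoc, Complex.normSq_eq_conj_mul_self]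

lemma fischer_self_real_zero (f : Pscal m k)
    (h : (∑ α ∈ f.support, wR m k α * Complex.normSq (f.coeff α) : ℝ) = 0) : f = 0 := by
  by_contra hf
  have hne : f.support.Nonempty := Finset.nonempty_iff_ne_empty.mpr
    (fun hs => hf (support_eq_empty.mp hs))
  have hpos : 0 < ∑ α ∈ f.support, wR m k α * Complex.normSq (f.coeff α) := by
    refine Finset.sum_pos (fun α hα => ?_) hne
    exact mul_pos (wR_pos m k α)
      (Complex.normSq_pos.mpr (mem_support_iff.mp hα))
  linarith

lemma wC_succ (p : Fin m × Fin k) (α : Fin m × Fin k →₀ ℕ) :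
    wC m k (Finsupp.single p 1 + α) = ((α p + 1 : ℕ) : ℂ) * wC m k α := by
  classical
  set s : Finset (Fin m × Fin k) :=
    insert p ((Finsupp.single p 1 + α).support ∪ α.support) with hs
  have hsub1 : (Finsupp.single p 1 + α).support ⊆ s := by
    intro q hq; exact Finset.mem_insert_of_mem (Finset.mem_union_left _ hq)
  have hsub2 : α.support ⊆ s := by
    intro q hq; exact Finset.mem_insert_of_mem (Finset.mem_union_right _ hq)
  have hp : p ∈ s := Finset.mem_insert_self _ _
  rw [wC, wC, Finsupp.prod_of_support_subset _ hsub1 _ (fun i _ => by simp),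
    Finsupp.prod_of_support_subset _ hsub2 _ (fun i _ => by simp),
    ← Finset.mul_prod_erase s _ hp, ← Finset.mul_prod_erase s _ hp]
  have h1 : ((Finsupp.single p 1 + α : Fin m × Fin k →₀ ℕ)) p = α p + 1 := by
    simp [Finsupp.add_apply, Finsupp.single_eq_same, add_comm]
  have h2 : ∀ q ∈ s.erase p, ((Finsupp.single p 1 + α : Fin m × Fin k →₀ ℕ)) q = α q := by
    intro q hq
    have : q ≠ p := Finset.ne_of_mem_erase hq
    simp [Finsupp.add_apply, Finsupp.single_eq_of_ne' (Ne.symm this)]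
  rw [h1, Finset.prod_congr rfl (fun q hq => by rw [h2 q hq])]
  rw [Nat.factorial_succ, ← mul_assoc]
  push_cast
  ring

lemma fischer_X_mul_monomial (p : Fin m × Fin k) (α β : Fin m × Fin k →₀ ℕ) (a b : ℂ) :
    fischer m k (X p * monomial α a) (monomial β b) =
      fischer m k (monomial α a) (pderiv p (monomial β b)) := by
  classical
  rw [X, monomial_mul, one_mul, pderiv_monomial, fischer_monomial, fischer_monomial]
  by_cases h : Finsupp.single p 1 + α = β
  · subst h
    rw [if_pos rfl, if_pos (by rw [add_tsub_cancel_left])]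
    have hp : ((Finsupp.single p 1 + α : Fin m × Fin k →₀ ℕ)) p = α p + 1 := by
      simp [Finsupp.add_apply, Finsupp.single_eq_same, add_comm]
    rw [wC_succ, hp]
    push_cast
    ring
  · rw [if_neg h]
    by_cases h2 : α = β - Finsupp.single p 1
    · rw [if_pos h2]
      have hβ : β p = 0 := by
        by_contra hb
        apply h
        rw [h2, add_tsub_cancel_of_le]
        exact Finsupp.single_le_iff.mpr (Nat.one_le_iff_ne_zero.mpr hb)
      simp [hβ]
    · rw [if_neg h2]

lemma fischer_X_mul (p : Fin m × Fin k) (f g : Pscal m k) :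
    fischer m k (X p * f) g = fischer m k f (pderiv p g) := by
  induction f using MvPolynomial.induction_on' with
  | monomial α a =>
    induction g using MvPolynomial.induction_on' with
    | monomial β b => exact fischer_X_mul_monomial m k p α β a b
    | add g1 g2 hg1 hg2 => rw [map_add, fischer_add_right, fischer_add_right, hg1, hg2]
  | add f1 f2 h1 h2 => rw [mul_add, fischer_add_left, fischer_add_left, h1, h2]

lemma fischer_mul_X (p : Fin m × Fin k) (f h : Pscal m k) :
    fischer m k f (X p * h) = fischer m k (pderiv p f) h := by
  calc fischer m k f (X p * h) = (starRingEnd ℂ) (fischer m k (X p * h) f) :=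
        (fischer_conj m k _ _).symm
    _ = (starRingEnd ℂ) (fischer m k h (pderiv p f)) := by rw [fischer_X_mul]
    _ = fischer m k (pderiv p f) h := fischer_conj m k _ _

lemma Esc_apply (i j : Fin k) (f : Pscal m k) :
    Esc m k i j f = ∑ l : Fin m, X (l, i) * pderiv (l, j) f := by
  simp [Esc]

lemma fischer_Esc (i j : Fin k) (f g : Pscal m k) :
    fischer m k (Esc m k i j f) g = fischer m k f (Esc m k j i g) := by
  rw [Esc_apply, Esc_apply, fischer_sum_left, fischer_sum_right]
  refine Finset.sum_congr rfl fun l _ => ?_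
  rw [fischer_X_mul, fischer_mul_X]

lemma deg_add (a b : Fin m × Fin k →₀ ℕ) :
    (a + b).degree = a.degree + b.degree := by
  simp [Finsupp.degree_eq_weight_one, map_add]

lemma deg_single (p : Fin m × Fin k) (n : ℕ) :
    (Finsupp.single p n).degree = n := by
  rcases eq_or_ne n 0 with rfl | hn
  · simp [Finsupp.degree]
  · exact Finsupp.degree_single _ _

lemma Esc_mem_Pdeg {n : ℕ} (i j : Fin k) {f : Pscal m k} (hf : f ∈ Pdeg m k n) :
    Esc m k i j f ∈ Pdeg m k n := by
  classical
  have hdeg : ∀ d : Fin m × Fin k →₀ ℕ, coeff d f ≠ 0 → d.degree = n := by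
    intro d hd
    have := (mem_homogeneousSubmodule _ _).mp hf hd
    rwa [Finsupp.degree_eq_weight_one]
  have hmono : ∀ α ∈ f.support, Esc m k i j (monomial α (coeff α f)) ∈ Pdeg m k n := by
    intro α hα
    rw [Esc_apply]
    refine sum_mem fun l _ => ?_
    rw [pderiv_monomial]
    by_cases hz : α (l, j) = 0
    · rw [hz]
      simp
    · rw [X, monomial_mul, one_mul, mem_homogeneousSubmodule]
      refine isHomogeneous_monomial _ ?_
      have hle : Finsupp.single (l, j) 1 ≤ α :=
        Finsupp.single_le_iff.mpr (Nat.one_le_iff_ne_zero.mpr hz)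
      have hα' : (α - Finsupp.single (l, j) 1) + Finsupp.single (l, j) 1 = α :=
        tsub_add_cancel_of_le hle
      have hdα : α.degree = n := hdeg α (mem_support_iff.mp hα)
      have := congrArg Finsupp.degree hα'
      rw [deg_add, deg_single] at this
      rw [deg_add, deg_single]
      omega
  have heq : Esc m k i j f = ∑ α ∈ f.support, Esc m k i j (monomial α (coeff α f)) := by
    conv_lhs => rw [as_sum f]
    rw [map_sum]
  rw [heq]
  exact sum_mem hmono

end AuxF


namespace AuxOp

open MvPolynomial

variable (m k : ℕ)

lemma pderiv_pderiv (p q : Fin m × Fin k) (f : Pscal m k) :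
    pderiv p (pderiv q f) = pderiv q (pderiv p f) := by
  induction f using MvPolynomial.induction_on' with
  | monomial α a =>
    rcases eq_or_ne p q with rfl | hpq
    · rfl
    · rw [pderiv_monomial, pderiv_monomial, pderiv_monomial, pderiv_monomial]
      have h1 : (α - Finsupp.single q 1 : Fin m × Fin k →₀ ℕ) p = α p := by
        simp [Finsupp.tsub_apply, Finsupp.single_eq_of_ne' (Ne.symm hpq)]
      have h2 : (α - Finsupp.single p 1 : Fin m × Fin k →₀ ℕ) q = α q := by
        simp [Finsupp.tsub_apply, Finsupp.single_eq_of_ne' hpq]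
      rw [h1, h2, tsub_right_comm]
      congr 1
      ring
  | add f g hf hg => rw [map_add, map_add, map_add, map_add, hf, hg]

lemma Eop_eq_rTensor (i j : Fin k) :
    Eop m k i j = LinearMap.rTensor (Cl m) (Esc m k i j) := by
  apply TensorProduct.ext'
  intro q c
  simp [Eop, Esc, pd, Algebra.TensorProduct.tmul_mul_tmul, TensorProduct.sum_tmul]

lemma dirac_tmul (r : Fin k) (q : Pscal m k) (c : Cl m) :
    dirac m k r (q ⊗ₜ[ℂ] c) = ∑ l : Fin m, pderiv (l, r) q ⊗ₜ[ℂ] (e m l * c) := by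
  simp [dirac, pd, Algebra.TensorProduct.tmul_mul_tmul]

lemma Eop_tmul (i j : Fin k) (q : Pscal m k) (c : Cl m) :
    Eop m k i j (q ⊗ₜ[ℂ] c) = ∑ l : Fin m, (X (l, i) * pderiv (l, j) q) ⊗ₜ[ℂ] c := by
  simp [Eop, pd, Algebra.TensorProduct.tmul_mul_tmul]

lemma dirac_Eop_apply (r i j : Fin k) (u : PC m k) :
    dirac m k r (Eop m k i j u) =
      Eop m k i j (dirac m k r u) + if r = i then dirac m k j u else 0 := by
  induction u using TensorProduct.induction_on with
  | zero => simp
  | add x y hx hy =>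
    rw [map_add, map_add, map_add, hx, hy]
    split_ifs <;> [skip; skip] <;> simp <;> abel
  | tmul q c =>
    rw [Eop_tmul, map_sum, dirac_tmul, map_sum]
    simp only [dirac_tmul, Eop_tmul]
    rw [Finset.sum_comm]
    rcases eq_or_ne r i with rfl | hri
    · rw [if_pos rfl, ← Finset.sum_add_distrib]
      refine Finset.sum_congr rfl fun l _ => ?_
      have hs : ∀ s : Fin m, pderiv (l, r) (X (s, r) * pderiv (s, j) q) =
          X (s, r) * pderiv (s, j) (pderiv (l, r) q) +
            if s = l then pderiv (l, j) q else 0 := by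
        intro s
        rw [pderiv_mul, pderiv_pderiv m k (l, r) (s, j) q, pderiv_X]
        rcases eq_or_ne s l with rfl | hsl
        · rw [if_pos rfl, Pi.single_eq_same, one_mul]
          ring_nf
        · rw [if_neg hsl, Pi.single_eq_of_ne (by simp [Prod.ext_iff]; exact hsl), zero_mul,
            add_zero, zero_add]
      simp_rw [hs, TensorProduct.add_tmul]
      rw [Finset.sum_add_distrib]
      congr 1
      rw [Finset.sum_congr rfl fun s _ => TensorProduct.ite_tmul _ _ _]
      rw [Finset.sum_ite_eq' Finset.univ l fun s => pderiv (l, j) q ⊗ₜ[ℂ] (e m l * c)]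
      simp
    · rw [if_neg hri, add_zero]
      refine Finset.sum_congr rfl fun l _ => Finset.sum_congr rfl fun s _ => ?_
      congr 1
      rw [pderiv_mul, pderiv_pderiv m k (l, r) (s, j) q]
      have hx : pderiv (l, r) (X (s, i) : Pscal m k) = 0 := by
        rw [pderiv_X, Pi.single_eq_of_ne (by simp [Prod.ext_iff]; intro _; exact Ne.symm hri)]
      rw [hx, zero_mul, zero_add]

lemma mem_Mono_iff (u : PC m k) : u ∈ Mono m k ↔ ∀ j, dirac m k j u = 0 := by
  simp [Mono, Submodule.mem_iInf, LinearMap.mem_ker]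

lemma Eop_mem_Mono (i j : Fin k) {u : PC m k} (hu : u ∈ Mono m k) :
    Eop m k i j u ∈ Mono m k := by
  rw [mem_Mono_iff] at hu ⊢
  intro r
  rw [dirac_Eop_apply, hu r, map_zero, zero_add]
  split_ifs with h
  · exact hu j
  · rfl

lemma Eop_mem_PCdeg (i j : Fin k) {n : ℕ} {u : PC m k} (hu : u ∈ PCdeg m k n) :
    Eop m k i j u ∈ PCdeg m k n := by
  obtain ⟨t, rfl⟩ := hu
  rw [Eop_eq_rTensor, ← LinearMap.rTensor_comp_apply]
  have hco : Esc m k i j ∘ₗ (Pdeg m k n).subtype =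
      (Pdeg m k n).subtype ∘ₗ
        ((Esc m k i j).restrict fun f hf => AuxF.Esc_mem_Pdeg m k i j hf) := rfl
  rw [hco, LinearMap.rTensor_comp_apply]
  exact ⟨_, rfl⟩

end AuxOp

namespace AuxD

open MvPolynomial

variable (m k : ℕ)

def bC : Module.Basis (Fin (Module.finrank ℂ (Cl m))) ℂ (Cl m) := Module.finBasis ℂ (Cl m)

def Phi : PC m k ≃ₗ[ℂ] (Fin (Module.finrank ℂ (Cl m)) →₀ Pscal m k) :=
  (TensorProduct.congr (LinearEquiv.refl ℂ (Pscal m k)) (bC m).repr).trans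
    (TensorProduct.finsuppScalarRight ℂ ℂ (Pscal m k) (Fin (Module.finrank ℂ (Cl m))))

lemma Phi_rTensor (h : Pscal m k →ₗ[ℂ] Pscal m k) (u : PC m k)
    (j : Fin (Module.finrank ℂ (Cl m))) :
    Phi m k (LinearMap.rTensor (Cl m) h u) j = h (Phi m k u j) := by
  induction u using TensorProduct.induction_on with
  | zero => rw [map_zero, (Phi m k).map_zero]; simp
  | add x y hx hy => simp [map_add, hx, hy]
  | tmul q c =>
    simp [Phi, LinearMap.rTensor_tmul, TensorProduct.congr_tmul,
      TensorProduct.finsuppScalarRight_apply_tmul_apply, map_smul]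

def Bf (u v : PC m k) : ℂ :=
  ∑ j, fischer m k (Phi m k u j) (Phi m k v j)

lemma Bf_self_eq (u : PC m k) : Bf m k u u =
    ((∑ j, ∑ α ∈ (Phi m k u j).support,
      wR m k α * Complex.normSq ((Phi m k u j).coeff α) : ℝ) : ℂ) := by
  rw [Bf, Complex.ofReal_sum]
  exact Finset.sum_congr rfl fun j _ => AuxF.fischer_self_eq m k _

def pcCore : InnerProductSpace.Core ℂ (PC m k) where
  inner u v := Bf m k u v
  conj_inner_symm u v := by
    simp only [Bf, map_sum]
    exact Finset.sum_congr rfl fun j _ => AuxF.fischer_conj m k _ _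
  re_inner_nonneg u := by
    have : 0 ≤ (Bf m k u u).re := by
      rw [Bf_self_eq, Complex.ofReal_re]
      refine Finset.sum_nonneg fun j _ => Finset.sum_nonneg fun α _ => ?_
      exact mul_nonneg (le_of_lt (AuxF.wR_pos m k α)) (Complex.normSq_nonneg _)
    exact this
  definite u h := by
    replace h : Bf m k u u = 0 := h
    rw [Bf_self_eq, Complex.ofReal_eq_zero] at h
    have hz : ∀ j, Phi m k u j = 0 := by
      intro j
      refine AuxF.fischer_self_real_zero m k _ ?_
      have hnn : ∀ j ∈ Finset.univ, (0:ℝ) ≤ ∑ α ∈ (Phi m k u j).support,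
          wR m k α * Complex.normSq ((Phi m k u j).coeff α) := by
        intro j _
        refine Finset.sum_nonneg fun α _ => ?_
        exact mul_nonneg (le_of_lt (AuxF.wR_pos m k α)) (Complex.normSq_nonneg _)
      exact (Finset.sum_eq_zero_iff_of_nonneg hnn).mp h j (Finset.mem_univ j)
    have h2 : Phi m k u = 0 := by
      ext j α
      rw [hz j]
      rfl
    exact (LinearEquiv.map_eq_zero_iff (Phi m k)).mp h2
  add_left x y z := by
    simp only [Bf, map_add, Finsupp.add_apply, AuxF.fischer_add_left,
      Finset.sum_add_distrib]
  smul_left x y r := by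
    simp only [Bf, map_smul, Finsupp.smul_apply, AuxF.fischer_smul_left, Finset.mul_sum]

noncomputable instance : NormedAddCommGroup (PC m k) := (pcCore m k).toNormedAddCommGroup

noncomputable instance : InnerProductSpace ℂ (PC m k) := InnerProductSpace.ofCore (pcCore m k).toCore

lemma inner_eq (u v : PC m k) : (inner ℂ u v : ℂ) = Bf m k u v := rfl

lemma inner_Eop (i j : Fin k) (u v : PC m k) :
    (inner ℂ (Eop m k i j u) v : ℂ) = inner ℂ u (Eop m k j i v) := by
  rw [inner_eq, inner_eq, Bf, Bf]
  refine Finset.sum_congr rfl fun l _ => ?_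
  rw [AuxOp.Eop_eq_rTensor, Phi_rTensor, AuxOp.Eop_eq_rTensor, Phi_rTensor,
    AuxF.fischer_Esc]

lemma Pdeg_le (n : ℕ) : Pdeg m k n ≤ restrictTotalDegree (Fin m × Fin k) ℂ n := by
  intro p hp
  exact (mem_restrictTotalDegree _ _ _).mpr
    ((mem_homogeneousSubmodule _ _).mp hp).totalDegree_le

instance (n : ℕ) : FiniteDimensional ℂ (Pdeg m k n) :=
  Submodule.finiteDimensional_of_le (Pdeg_le m k n)

instance (n : ℕ) : FiniteDimensional ℂ (PCdeg m k n) := by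
  unfold PCdeg
  exact Module.Finite.range _

end AuxD

end Aux

/-- Decomposition of monogenics into simplicial monogenics (Lemma 4.2(i)):
M_ℓ = M^S_ℓ ⊕ Σ_{1≤i<j≤k} E_ji(M_ℓ). -/
theorem monogenics_decompose_simplicial (m k : ℕ) (hm : 1 ≤ m) (hk : 1 ≤ k)
    (hrange : 2 * k ≤ m) (ℓ : ℕ) :
    (SimpMono m k ⊓ PCdeg m k ℓ) ⊔
        (⨆ p : {p : Fin k × Fin k // p.1 < p.2},
          (Mono m k ⊓ PCdeg m k ℓ).map (Eop m k p.1.2 p.1.1)) =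
      Mono m k ⊓ PCdeg m k ℓ ∧
    (SimpMono m k ⊓ PCdeg m k ℓ) ⊓
        (⨆ p : {p : Fin k × Fin k // p.1 < p.2},
          (Mono m k ⊓ PCdeg m k ℓ).map (Eop m k p.1.2 p.1.1)) = ⊥ := by
  classical
  set V : Submodule ℂ (PC m k) := Mono m k ⊓ PCdeg m k ℓ with hV
  set K : Submodule ℂ (PC m k) :=
    ⨆ p : {p : Fin k × Fin k // p.1 < p.2}, V.map (Eop m k p.1.2 p.1.1) with hK
  have hEV : ∀ (i j : Fin k) (u : PC m k), u ∈ V → Eop m k i j u ∈ V := by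
    intro i j u hu
    exact ⟨AuxOp.Eop_mem_Mono m k i j hu.1, AuxOp.Eop_mem_PCdeg m k i j hu.2⟩
  have hKV : K ≤ V := by
    refine iSup_le fun p => ?_
    rintro x ⟨u, hu, rfl⟩
    exact hEV _ _ u hu
  have hKdeg : K ≤ PCdeg m k ℓ := le_trans hKV inf_le_right
  haveI : FiniteDimensional ℂ K := Submodule.finiteDimensional_of_le hKdeg
  -- identify Kᗮ ⊓ V with the simplicial part
  have hSimp_mem : ∀ v : PC m k, v ∈ SimpMono m k ⊓ PCdeg m k ℓ ↔
      (v ∈ V ∧ ∀ p : {p : Fin k × Fin k // p.1 < p.2}, Eop m k p.1.1 p.1.2 v = 0) := by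
    intro v
    constructor
    · rintro ⟨⟨hmono, hker⟩, hdeg⟩
      refine ⟨⟨hmono, hdeg⟩, fun p => ?_⟩
      have := Submodule.mem_iInf _ |>.mp hker p
      exact LinearMap.mem_ker.mp this
    · rintro ⟨⟨hmono, hdeg⟩, hker⟩
      exact ⟨⟨hmono, Submodule.mem_iInf _ |>.mpr fun p => LinearMap.mem_ker.mpr (hker p)⟩, hdeg⟩
  have claim : Kᗮ ⊓ V = SimpMono m k ⊓ PCdeg m k ℓ := by
    apply le_antisymm
    · rintro v ⟨hvo, hvV⟩
      refine (hSimp_mem v).mpr ⟨hvV, fun p => ?_⟩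
      have hw : Eop m k p.1.1 p.1.2 v ∈ V := hEV _ _ v hvV
      have hgen : Eop m k p.1.2 p.1.1 (Eop m k p.1.1 p.1.2 v) ∈ K := by
        refine Submodule.mem_iSup_of_mem p ?_
        exact Submodule.mem_map_of_mem hw
      have h0 : (inner ℂ (Eop m k p.1.2 p.1.1 (Eop m k p.1.1 p.1.2 v)) v : ℂ) = 0 :=
        (Submodule.mem_orthogonal K v).mp hvo _ hgen
      rw [AuxD.inner_Eop] at h0
      exact (AuxD.pcCore m k).definite _ h0
    · intro v hv
      obtain ⟨hvV, hker⟩ := (hSimp_mem v).mp hv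
      refine ⟨?_, hvV⟩
      rw [← Submodule.iInf_orthogonal]
      refine Submodule.mem_iInf _ |>.mpr fun p => ?_
      rw [Submodule.mem_orthogonal]
      rintro x ⟨u, hu, rfl⟩
      rw [AuxD.inner_Eop, hker p, AuxD.inner_eq]
      simp [AuxD.Bf, AuxF.fischer_zero_right]
  constructor
  · rw [← claim, sup_comm]
    exact Submodule.sup_orthogonal_inf_of_hasOrthogonalProjection hKV
  · rw [← claim]
    have h1 : (Kᗮ ⊓ V) ⊓ K ≤ Kᗮ ⊓ K := inf_le_inf_right _ inf_le_left
    have h2 : Kᗮ ⊓ K = ⊥ := by rw [inf_comm]; exact Submodule.inf_orthogonal_eq_bot K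
    exact le_bot_iff.mp (h2 ▸ h1)
end

section
/- Harmonic splitting in each degree (equation (4.3)). For every ℓ ∈ ℕ, one has P_ℓ = H_ℓ ⊕ Σ_{1≤i≤j≤k} r²_ij · P_{ℓ−2}; that is, every complex polynomial homogeneous of total degree ℓ is the sum of a harmonic polynomial of degree ℓ and an element of Σ_{1≤i≤j≤k} r²_ij · P_{ℓ−2}, and H_ℓ ∩ (Σ_{1≤i≤j≤k} r²_ij · P_{ℓ−2}) = {0}. (Here P_{ℓ−2} = {0} if ℓ < 2.) -/
open scoped TensorProduct

noncomputable section
namespace HSplit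
open MvPolynomial

variable {m k : ℕ}
open MvPolynomial

variable {m k : ℕ}

abbrev Ps (m k : ℕ) := MvPolynomial (Fin m × Fin k) ℂ

def wn (α : (Fin m × Fin k) →₀ ℕ) : ℕ := α.prod fun _ e => e.factorial

lemma wn_eq {α : (Fin m × Fin k) →₀ ℕ} {s : Finset (Fin m × Fin k)} (h : α.support ⊆ s) :
    wn α = ∏ x ∈ s, (α x).factorial :=
  Finsupp.prod_of_support_subset α h _ (fun _ _ => rfl)

lemma wn_pos (α : (Fin m × Fin k) →₀ ℕ) : 0 < wn α :=
  Finset.prod_pos fun _ _ => Nat.factorial_pos _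

lemma wn_add_single (α : (Fin m × Fin k) →₀ ℕ) (v : Fin m × Fin k) :
    wn (α + Finsupp.single v 1) = (α v + 1) * wn α := by
  classical
  set s : Finset (Fin m × Fin k) := insert v α.support with hs
  have h1 : (α + Finsupp.single v 1).support ⊆ s := by
    refine (Finsupp.support_add).trans ?_
    apply Finset.union_subset
    · exact fun x hx => Finset.mem_insert_of_mem hx
    · refine (Finsupp.support_single_subset).trans ?_
      simp [s]
  have h2 : α.support ⊆ s := fun x hx => Finset.mem_insert_of_mem hx
  rw [wn_eq h1, wn_eq h2]
  have hv : v ∈ s := Finset.mem_insert_self _ _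
  rw [← Finset.mul_prod_erase s _ hv, ← Finset.mul_prod_erase s _ hv]
  have hrest : ∀ x ∈ s.erase v,
      ((α + Finsupp.single v 1 : (Fin m × Fin k) →₀ ℕ) x).factorial = (α x).factorial := by
    intro x hx
    have hxv : x ≠ v := Finset.ne_of_mem_erase hx
    rw [Finsupp.add_apply, Finsupp.single_apply, if_neg (Ne.symm hxv), add_zero]
  rw [Finset.prod_congr rfl hrest]
  have hvv : (α + Finsupp.single v 1 : (Fin m × Fin k) →₀ ℕ) v = α v + 1 := by
    rw [Finsupp.add_apply, Finsupp.single_apply, if_pos rfl]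
  rw [hvv, Nat.factorial_succ, mul_assoc]

/-- The Fischer pairing as a plain function. -/
def F (f g : Pscal m k) : ℂ :=
  ∑ α ∈ f.support, (wn α : ℂ) * f.coeff α * g.coeff α

lemma F_eq {f : Pscal m k} (g : Pscal m k) {s : Finset ((Fin m × Fin k) →₀ ℕ)}
    (hf : f.support ⊆ s) :
    F f g = ∑ α ∈ s, (wn α : ℂ) * f.coeff α * g.coeff α := by
  refine Finset.sum_subset hf ?_
  intro α _ hα
  rw [MvPolynomial.notMem_support_iff] at hα
  simp [hα]

lemma F_comm (f g : Pscal m k) : F f g = F g f := by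
  classical
  rw [F_eq g (Finset.subset_union_left (s₂ := g.support)),
      F_eq (s := g.support ∪ f.support) f (Finset.subset_union_left)]
  rw [Finset.union_comm]
  exact Finset.sum_congr rfl fun α _ => by ring


lemma F_add_right (f g g' : Pscal m k) : F f (g + g') = F f g + F f g' := by
  simp [F, MvPolynomial.coeff_add, mul_add, Finset.sum_add_distrib]

lemma F_smul_right (c : ℂ) (f g : Pscal m k) : F f (c • g) = c * F f g := by
  simp [F, MvPolynomial.coeff_smul, Finset.mul_sum]
  exact Finset.sum_congr rfl fun α _ => by ring

lemma F_add_left (f f' g : Pscal m k) : F (f + f') g = F f g + F f' g := by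
  classical
  rw [F_eq (f := f + f') g (s := f.support ∪ f'.support)
      (fun _ h => MvPolynomial.support_add h),
    F_eq (f := f) g (Finset.subset_union_left),
    F_eq (f := f') g (Finset.subset_union_right), ← Finset.sum_add_distrib]
  exact Finset.sum_congr rfl fun α _ => by
    rw [MvPolynomial.coeff_add]; ring

lemma F_smul_left (c : ℂ) (f g : Pscal m k) : F (c • f) g = c * F f g := by
  rw [F_comm, F_smul_right, F_comm]

lemma F_zero_left (g : Pscal m k) : F 0 g = 0 := by simp [F]

/-- The Fischer pairing as a bilinear map. -/
def Fb : Pscal m k →ₗ[ℂ] Pscal m k →ₗ[ℂ] ℂ where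
  toFun f := { toFun := F f, map_add' := F_add_right f, map_smul' := fun c g => F_smul_right c f g }
  map_add' f f' := LinearMap.ext fun g => F_add_left f f' g
  map_smul' c f := LinearMap.ext fun g => F_smul_left c f g

@[simp] lemma Fb_apply (f g : Pscal m k) : Fb f g = F f g := rfl

lemma coeff_pderiv (v : Fin m × Fin k) (q : Pscal m k) (β : (Fin m × Fin k) →₀ ℕ) :
    MvPolynomial.coeff β (MvPolynomial.pderiv v q) =
      (β v + 1) * MvPolynomial.coeff (β + Finsupp.single v 1) q := by
  classical
  induction q using MvPolynomial.induction_on' with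
  | monomial s a =>
    rw [MvPolynomial.pderiv_monomial]
    rw [MvPolynomial.coeff_monomial, MvPolynomial.coeff_monomial]
    by_cases hsv : s v = 0
    · rw [hsv]
      have h2 : ¬ s = β + Finsupp.single v 1 := by
        intro h
        apply absurd hsv
        rw [h, Finsupp.add_apply, Finsupp.single_apply, if_pos rfl]
        omega
      simp [h2]
    · have hle : Finsupp.single v 1 ≤ s := by
        rw [Finsupp.single_le_iff]; omega
      have hiff : s - Finsupp.single v 1 = β ↔ s = β + Finsupp.single v 1 :=
        tsub_eq_iff_eq_add_of_le hle
      by_cases h : s = β + Finsupp.single v 1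
      · rw [if_pos (hiff.mpr h), if_pos h]
        have : s v = β v + 1 := by
          rw [h, Finsupp.add_apply, Finsupp.single_apply, if_pos rfl]
        rw [this]; push_cast; ring
      · rw [if_neg (fun hh => h (hiff.mp hh)), if_neg h, mul_zero]
  | add p q hp hq =>
    rw [map_add, MvPolynomial.coeff_add, MvPolynomial.coeff_add, hp, hq]; ring

/-- Adjointness: F (X v * p) q = F p (∂_v q). -/
lemma F_X_mul (v : Fin m × Fin k) (p q : Pscal m k) :
    F (MvPolynomial.X v * p) q = F p (MvPolynomial.pderiv v q) := by
  classical
  rw [F, MvPolynomial.support_X_mul, Finset.sum_map, F]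
  refine Finset.sum_congr rfl fun β _ => ?_
  rw [coeff_pderiv]
  have h1 : Finsupp.single v 1 + β = β + Finsupp.single v 1 := add_comm _ _
  simp only [addLeftEmbedding_apply, h1]
  rw [show MvPolynomial.coeff (β + Finsupp.single v 1) (MvPolynomial.X v * p)
      = MvPolynomial.coeff β p from by rw [← h1]; exact MvPolynomial.coeff_X_mul β v p]
  rw [wn_add_single]
  push_cast
  ring


/-- Coefficientwise complex conjugation. -/
def conjP (f : Pscal m k) : Pscal m k := MvPolynomial.map (starRingEnd ℂ) f

lemma coeff_conjP (f : Pscal m k) (α) :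
    MvPolynomial.coeff α (conjP f) = (starRingEnd ℂ) (MvPolynomial.coeff α f) :=
  MvPolynomial.coeff_map _ _ _

lemma F_conj_self_eq_zero {f : Pscal m k} (h : F f (conjP f) = 0) : f = 0 := by
  classical
  have hre : F f (conjP f) =
      ((∑ α ∈ f.support, (wn α : ℝ) * Complex.normSq (f.coeff α) : ℝ) : ℂ) := by
    rw [F, Complex.ofReal_sum]
    refine Finset.sum_congr rfl fun α _ => ?_
    rw [coeff_conjP, mul_assoc, Complex.mul_conj]
    push_cast
    ring
  rw [hre] at h
  have h0 : (∑ α ∈ f.support, (wn α : ℝ) * Complex.normSq (f.coeff α)) = 0 := by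
    exact_mod_cast h
  have hterm : ∀ α ∈ f.support, (wn α : ℝ) * Complex.normSq (f.coeff α) = 0 := by
    rw [Finset.sum_eq_zero_iff_of_nonneg] at h0
    · exact h0
    · intro α _
      exact mul_nonneg (Nat.cast_nonneg _) (Complex.normSq_nonneg _)
  by_contra hf
  obtain ⟨α, hα⟩ := Finset.nonempty_of_ne_empty
    (fun hh => hf (MvPolynomial.support_eq_empty.mp hh))
  have h1 := hterm α hα
  have hw : (0:ℝ) < wn α := by exact_mod_cast wn_pos α
  have h2 : Complex.normSq (f.coeff α) = 0 := by
    rcases mul_eq_zero.mp h1 with h | h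
    · exact absurd h hw.ne'
    · exact h
  exact (MvPolynomial.mem_support_iff.mp hα) (Complex.normSq_eq_zero.mp h2)


section WithDefs

variable (i j : Fin k)

lemma rP_isHomogeneous : (rP m k i j).IsHomogeneous 2 := by
  rw [rP]
  apply MvPolynomial.IsHomogeneous.sum
  intro l _
  exact (MvPolynomial.isHomogeneous_X _ _).mul (MvPolynomial.isHomogeneous_X _ _)

lemma conjP_rP_mul (p : Pscal m k) : conjP (rP m k i j * p) = rP m k i j * conjP p := by
  rw [conjP, map_mul]
  congr 1
  rw [rP, map_sum]
  refine Finset.sum_congr rfl fun l _ => ?_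
  rw [map_mul, MvPolynomial.map_X, MvPolynomial.map_X]

lemma conjP_isHomogeneous {f : Pscal m k} {n : ℕ} (hf : f.IsHomogeneous n) :
    (conjP f).IsHomogeneous n := by
  intro d hd
  apply hf
  rw [coeff_conjP] at hd
  simpa using hd

lemma degree_add_single (β : (Fin m × Fin k) →₀ ℕ) (v : Fin m × Fin k) :
    Finsupp.degree (β + Finsupp.single v 1) = Finsupp.degree β + 1 := by
  have h1 : Finsupp.degree (Finsupp.single v (1:ℕ)) = 1 := by
    exact Finsupp.degree_single _ _
  rw [Finsupp.degree_eq_weight_one] at h1 ⊢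
  rw [map_add, h1]

lemma isHomogeneous_pderiv {q : Pscal m k} {n d : ℕ} (hq : q.IsHomogeneous n)
    (hd : d + 1 = n) (v : Fin m × Fin k) : (MvPolynomial.pderiv v q).IsHomogeneous d := by
  intro β hβ
  rw [coeff_pderiv] at hβ
  have h1 : MvPolynomial.coeff (β + Finsupp.single v 1) q ≠ 0 := by
    intro h; rw [h, mul_zero] at hβ; exact hβ rfl
  have h2 := hq h1
  simp only [Pi.one_def, ← Finsupp.degree_eq_weight_one] at h2 ⊢
  rw [degree_add_single] at h2
  omega

lemma pderiv_eq_zero_of_deg_zero {q : Pscal m k} (hq : q.IsHomogeneous 0)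
    (v : Fin m × Fin k) : MvPolynomial.pderiv v q = 0 := by
  ext β
  rw [coeff_pderiv, MvPolynomial.coeff_zero]
  have : MvPolynomial.coeff (β + Finsupp.single v 1) q = 0 := by
    apply hq.coeff_eq_zero
    rw [degree_add_single]
    omega
  rw [this, mul_zero]

lemma lap_isHomogeneous {q : Pscal m k} {n d : ℕ} (hq : q.IsHomogeneous n)
    (hd : d + 2 = n) : (lap m k i j q).IsHomogeneous d := by
  rw [lap, LinearMap.sum_apply]
  rw [← MvPolynomial.mem_homogeneousSubmodule]
  apply Submodule.sum_mem
  intro l _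
  rw [LinearMap.comp_apply]
  rw [MvPolynomial.mem_homogeneousSubmodule]
  exact isHomogeneous_pderiv (isHomogeneous_pderiv (n := n) (d := d + 1) hq (by omega) _) (by omega) _

lemma lap_eq_zero {q : Pscal m k} {n : ℕ} (hq : q.IsHomogeneous n) (hn : n < 2) :
    lap m k i j q = 0 := by
  rw [lap, LinearMap.sum_apply]
  apply Finset.sum_eq_zero
  intro l _
  rw [LinearMap.comp_apply]
  show MvPolynomial.pderiv (l, i) (MvPolynomial.pderiv (l, j) q) = 0
  interval_cases n
  · rw [pderiv_eq_zero_of_deg_zero hq, map_zero]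
  · rw [pderiv_eq_zero_of_deg_zero (isHomogeneous_pderiv hq rfl _)]

lemma F_rP_mul (p q : Pscal m k) :
    F (rP m k i j * p) q = F p (lap m k i j q) := by
  have h1 : rP m k i j * p = ∑ l : Fin m,
      MvPolynomial.X (l, j) * (MvPolynomial.X (l, i) * p) := by
    rw [rP, Finset.sum_mul]
    refine Finset.sum_congr rfl fun l _ => by ring
  rw [h1]
  have h2 : F (∑ l : Fin m, MvPolynomial.X (l, j) * (MvPolynomial.X (l, i) * p)) q
      = ∑ l : Fin m, F (MvPolynomial.X (l, j) * (MvPolynomial.X (l, i) * p)) q := by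
    rw [show (F (∑ l : Fin m, MvPolynomial.X (l, j) * (MvPolynomial.X (l, i) * p)) q)
        = Fb (∑ l : Fin m, MvPolynomial.X (l, j) * (MvPolynomial.X (l, i) * p)) q from rfl,
      map_sum, LinearMap.sum_apply]
    rfl
  rw [h2]
  have h3 : ∀ l : Fin m, F (MvPolynomial.X (l, j) * (MvPolynomial.X (l, i) * p)) q
      = F p (MvPolynomial.pderiv (l, i) (MvPolynomial.pderiv (l, j) q)) := by
    intro l
    rw [F_X_mul, F_X_mul]
  rw [Finset.sum_congr rfl fun l _ => h3 l]
  rw [lap, LinearMap.sum_apply]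
  rw [show F p (∑ l : Fin m, ((MvPolynomial.pderiv (l, i)).toLinearMap ∘ₗ
      (MvPolynomial.pderiv (l, j)).toLinearMap) q) = Fb p (∑ l : Fin m, _) from rfl, map_sum]
  rfl

/-- The sum Σ r²_ij ⬝ P_{ℓ-2}. -/
def Wsub (m k ℓ : ℕ) : Submodule ℂ (Pscal m k) :=
  ⨆ p : {p : Fin k × Fin k // p.1 ≤ p.2},
    (PdegZ m k ((ℓ : ℤ) - 2)).map (LinearMap.mulLeft ℂ (rP m k p.1.1 p.1.2))

variable {ℓ : ℕ}

lemma conjP_mem_PdegZ {g : Pscal m k} {n : ℤ} (hg : g ∈ PdegZ m k n) :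
    conjP g ∈ PdegZ m k n := by
  rw [PdegZ] at hg ⊢
  split_ifs at hg ⊢ with h0
  · exact (MvPolynomial.mem_homogeneousSubmodule _ _).mpr
      (conjP_isHomogeneous ((MvPolynomial.mem_homogeneousSubmodule _ _).mp hg))
  · rw [Submodule.mem_bot] at hg ⊢
    rw [hg]; exact map_zero _

lemma conjP_mem_Wsub {f : Pscal m k} (h : f ∈ Wsub m k ℓ) : conjP f ∈ Wsub m k ℓ := by
  refine Submodule.iSup_induction _ (motive := fun f => conjP f ∈ Wsub m k ℓ) h
    (fun p x hx => ?_) ?_ ?_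
  · obtain ⟨g, hg, rfl⟩ := hx
    rw [LinearMap.mulLeft_apply, conjP_rP_mul]
    refine le_iSup (fun p : {p : Fin k × Fin k // p.1 ≤ p.2} =>
      (PdegZ m k ((ℓ : ℤ) - 2)).map (LinearMap.mulLeft ℂ (rP m k p.1.1 p.1.2))) p ?_
    exact Submodule.mem_map_of_mem (conjP_mem_PdegZ hg)
  · show conjP (0 : Pscal m k) ∈ Wsub m k ℓ
    rw [show conjP (0 : Pscal m k) = 0 from map_zero _]; exact zero_mem _
  · intro a b ha hb
    have ha' : conjP a ∈ Wsub m k ℓ := ha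
    have hb' : conjP b ∈ Wsub m k ℓ := hb
    show conjP (a + b) ∈ Wsub m k ℓ
    rw [show conjP (a + b) = conjP a + conjP b from map_add _ _ _]
    exact add_mem ha' hb'

lemma mem_Harm_iff {x : Pscal m k} :
    x ∈ Harm m k ↔ ∀ p : {p : Fin k × Fin k // p.1 ≤ p.2}, lap m k p.1.1 p.1.2 x = 0 := by
  rw [Harm, Submodule.mem_iInf]
  exact forall_congr' fun p => LinearMap.mem_ker

lemma F_Wsub_harm {f x : Pscal m k} (hf : f ∈ Wsub m k ℓ) (hx : x ∈ Harm m k) :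
    F f x = 0 := by
  refine Submodule.iSup_induction _ (motive := fun f => F f x = 0) hf (fun p g hg => ?_)
    (F_zero_left x) (fun a b ha hb => by
      have ha' : F a x = 0 := ha
      have hb' : F b x = 0 := hb
      show F (a + b) x = 0
      rw [F_add_left, ha', hb', add_zero])
  obtain ⟨g', hg', rfl⟩ := hg
  show F (LinearMap.mulLeft ℂ (rP m k p.1.1 p.1.2) g') x = 0
  rw [LinearMap.mulLeft_apply, F_rP_mul, mem_Harm_iff.mp hx p]
  simp [F]

lemma Wsub_le_Pdeg : Wsub m k ℓ ≤ Pdeg m k ℓ := by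
  apply iSup_le; intro p
  rw [Submodule.map_le_iff_le_comap]
  intro g hg
  rw [PdegZ] at hg
  split_ifs at hg with h0
  · rw [Submodule.mem_comap, LinearMap.mulLeft_apply, MvPolynomial.mem_homogeneousSubmodule]
    have hg2 := (MvPolynomial.mem_homogeneousSubmodule _ _).mp hg
    rw [show ℓ = 2 + ((ℓ : ℤ) - 2).toNat from by omega]
    exact (rP_isHomogeneous _ _).mul hg2
  · rw [Submodule.mem_bot] at hg
    rw [Submodule.mem_comap, hg, map_zero]
    exact zero_mem _

lemma Pdeg_fd : FiniteDimensional ℂ (Pdeg m k ℓ : Submodule ℂ (Pscal m k)) := by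
  refine Submodule.finiteDimensional_of_le
    (S₂ := MvPolynomial.restrictTotalDegree (Fin m × Fin k) ℂ ℓ) ?_
  intro x hx
  rw [MvPolynomial.mem_restrictTotalDegree]
  exact ((MvPolynomial.mem_homogeneousSubmodule _ _).mp hx).totalDegree_le

end WithDefs
end HSplit
end


/-- Harmonic splitting in each degree (equation (4.3)):
P_ℓ = H_ℓ ⊕ Σ_{1≤i≤j≤k} r²_ij · P_{ℓ−2}. -/
theorem harmonic_splitting (m k : ℕ) (hm : 1 ≤ m) (hk : 1 ≤ k) (ℓ : ℕ) :
    (Harm m k ⊓ Pdeg m k ℓ) ⊔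
        (⨆ p : {p : Fin k × Fin k // p.1 ≤ p.2},
          (PdegZ m k ((ℓ : ℤ) - 2)).map (LinearMap.mulLeft ℂ (rP m k p.1.1 p.1.2))) =
      Pdeg m k ℓ ∧
    (Harm m k ⊓ Pdeg m k ℓ) ⊓
        (⨆ p : {p : Fin k × Fin k // p.1 ≤ p.2},
          (PdegZ m k ((ℓ : ℤ) - 2)).map (LinearMap.mulLeft ℂ (rP m k p.1.1 p.1.2))) = ⊥ := by
  classical
  have hWdef : (⨆ p : {p : Fin k × Fin k // p.1 ≤ p.2},
      (PdegZ m k ((ℓ : ℤ) - 2)).map (LinearMap.mulLeft ℂ (rP m k p.1.1 p.1.2)))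
      = HSplit.Wsub m k ℓ := rfl
  rw [hWdef]
  haveI hfd : FiniteDimensional ℂ (Pdeg m k ℓ : Submodule ℂ (Pscal m k)) := HSplit.Pdeg_fd
  set V : Submodule ℂ (Pscal m k) := Pdeg m k ℓ with hV
  set Bv : LinearMap.BilinForm ℂ V := HSplit.Fb.compl₁₂ V.subtype V.subtype with hBv
  set W' : Submodule ℂ V := (HSplit.Wsub m k ℓ).comap V.subtype with hW'
  have hBv_apply : ∀ x y : V, Bv x y = HSplit.F (x : Pscal m k) (y : Pscal m k) := by
    intro x y; rfl
  have hrefl : Bv.IsRefl := by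
    intro x y h
    rw [hBv_apply] at h ⊢
    rw [HSplit.F_comm]
    exact h
  have hWle : HSplit.Wsub m k ℓ ≤ V := HSplit.Wsub_le_Pdeg
  have hnd : (Bv.restrict W').Nondegenerate := by
    have hreflW : LinearMap.IsRefl (Bv.restrict W') := fun x y h => hrefl _ _ h
    suffices hsep : LinearMap.SeparatingLeft (Bv.restrict W') from
      ⟨hsep, fun y hy => hsep y fun x => hreflW _ _ (hy x)⟩
    intro x hx
    have hxW : ((x : V) : Pscal m k) ∈ HSplit.Wsub m k ℓ := x.2
    have hconjW : HSplit.conjP ((x : V) : Pscal m k) ∈ HSplit.Wsub m k ℓ :=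
      HSplit.conjP_mem_Wsub hxW
    have h0 := hx ⟨⟨HSplit.conjP ((x : V) : Pscal m k), hWle hconjW⟩,
      Submodule.mem_comap.mpr hconjW⟩
    have hf : ((x : V) : Pscal m k) = 0 := HSplit.F_conj_self_eq_zero h0
    exact Subtype.ext (Subtype.ext hf)
  have hcompl : IsCompl W' (Bv.orthogonal W') :=
    LinearMap.BilinForm.isCompl_orthogonal_of_restrict_nondegenerate hrefl hnd
  have hOrth : Bv.orthogonal W' = (Harm m k).comap V.subtype := by
    ext x
    rw [LinearMap.BilinForm.mem_orthogonal_iff, Submodule.mem_comap]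
    constructor
    · intro h
      rw [HSplit.mem_Harm_iff]
      intro p
      set q := lap m k p.1.1 p.1.2 (x : Pscal m k) with hq
      have hxh : (x : Pscal m k).IsHomogeneous ℓ :=
        (MvPolynomial.mem_homogeneousSubmodule _ _).mp x.2
      by_cases h2 : 2 ≤ ℓ
      · have hqh : q.IsHomogeneous (ℓ - 2) := HSplit.lap_isHomogeneous _ _ hxh (by omega)
        have hcq : HSplit.conjP q ∈ PdegZ m k ((ℓ : ℤ) - 2) := by
          rw [PdegZ, if_pos (by omega : (0:ℤ) ≤ (ℓ:ℤ) - 2)]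
          refine (MvPolynomial.mem_homogeneousSubmodule _ _).mpr ?_
          have : (((ℓ : ℤ) - 2).toNat) = ℓ - 2 := by omega
          rw [this]
          exact HSplit.conjP_isHomogeneous hqh
        have hmem : rP m k p.1.1 p.1.2 * HSplit.conjP q ∈ HSplit.Wsub m k ℓ := by
          refine le_iSup (fun p : {p : Fin k × Fin k // p.1 ≤ p.2} =>
            (PdegZ m k ((ℓ : ℤ) - 2)).map (LinearMap.mulLeft ℂ (rP m k p.1.1 p.1.2))) p ?_
          exact Submodule.mem_map_of_mem hcq
        have h3 := h ⟨rP m k p.1.1 p.1.2 * HSplit.conjP q, hWle hmem⟩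
          (Submodule.mem_comap.mpr hmem)
        rw [hBv_apply] at h3
        rw [HSplit.F_rP_mul, ← hq, HSplit.F_comm] at h3
        exact HSplit.F_conj_self_eq_zero h3
      · exact HSplit.lap_eq_zero _ _ hxh (by omega)
    · intro hH n hn
      rw [hBv_apply]
      exact HSplit.F_Wsub_harm (Submodule.mem_comap.mp hn) hH
  have hsup := hcompl.sup_eq_top
  have hinf := hcompl.inf_eq_bot
  constructor
  · have h1 := congrArg (Submodule.map V.subtype) hsup
    rw [Submodule.map_sup, hOrth, Submodule.map_comap_subtype,
      Submodule.map_comap_subtype, Submodule.map_subtype_top] at h1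
    rw [inf_eq_right.mpr hWle, inf_comm V (Harm m k), sup_comm] at h1
    exact h1
  · rw [eq_bot_iff]
    intro x hx
    obtain ⟨hx1, hxW⟩ := Submodule.mem_inf.mp hx
    obtain ⟨hxH, hxV⟩ := Submodule.mem_inf.mp hx1
    set x' : V := ⟨x, hxV⟩ with hx'
    have hmemW' : x' ∈ W' := Submodule.mem_comap.mpr hxW
    have hmemO : x' ∈ Bv.orthogonal W' := by
      rw [hOrth]; exact Submodule.mem_comap.mpr hxH
    have : x' ∈ W' ⊓ Bv.orthogonal W' := Submodule.mem_inf.mpr ⟨hmemW', hmemO⟩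
    rw [hinf, Submodule.mem_bot] at this
    have hx0 : x = 0 := congrArg (Subtype.val) this
    rw [hx0]; exact Submodule.zero_mem ⊥
end
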